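/- Let A = 2K₂, B = P₃ ⊔ K₁, C = K_{1,3}, and D = K₃ ⊔ K₁. The multisets M = {[A ⊔ C], [B ⊔ D]} and M' = {[B ⊔ C], [A ⊔ D]} are distinct multisets of isomorphism classes of graphs with exactly 5 edges, and ED(A ⊔ C) + ED(B ⊔ D) = ED(B ⊔ C) + ED(A ⊔ D) as multisets. Consequently generalized edge reconstruction fails for n = 5 with k = 2 pieces, i.e. k₅ ≤ 2. -/

import Mathlib

open SimpleGraph

/-- A finite simple graph, packaged with its (finite) vertex type. -/
structure FGraph : Type 1 where
  V : Type
  [finV : Finite V]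
  graph : SimpleGraph V

attribute [instance] FGraph.finV

namespace FGraph

/-- Two finite graphs are isomorphic if there is a graph isomorphism between them. -/
def IsIsoTo (G H : FGraph) : Prop := Nonempty (G.graph ≃g H.graph)

instance setoid : Setoid FGraph where
  r := IsIsoTo
  iseqv := ⟨fun G => ⟨RelIso.refl G.graph.Adj⟩, fun ⟨e⟩ => ⟨e.symm⟩, fun ⟨e⟩ ⟨f⟩ => ⟨e.trans f⟩⟩

end FGraph

/-- Isomorphism classes of finite simple graphs. -/
def GraphClass : Type 1 := Quotient FGraph.setoid

namespace FGraph

/-- The isomorphism class of a finite graph. -/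
def cls (G : FGraph) : GraphClass := Quotient.mk _ G

/-- The number of edges of a finite graph. -/
noncomputable def edgeCount (G : FGraph) : ℕ := G.graph.edgeSet.ncard

/-- The edge-deleted subgraph `G - e`: same vertices, with the edge `e` removed. -/
def deleteEdge (G : FGraph) (e : Sym2 G.V) : FGraph :=
  { V := G.V, graph := G.graph.deleteEdges {e} }

/-- The multiset of edge-deleted subgraphs of `G` (one for each edge), as graphs. -/
noncomputable def deckGraphs (G : FGraph) : Multiset FGraph :=
  (G.graph.edgeSet.toFinite.toFinset.val).map fun e => G.deleteEdge e

/-- The edge deck of `G` : the multiset of isomorphism classes of the edge-deleted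
subgraphs `G - e`, one for each edge `e` of `G`. -/
noncomputable def edgeDeck (G : FGraph) : Multiset GraphClass :=
  G.deckGraphs.map cls

lemma exists_of_mem_edgeDeck {G : FGraph} {c : GraphClass} (hc : c ∈ G.edgeDeck) :
    ∃ H : FGraph, H.cls = c ∧ H.edgeCount = G.edgeCount - 1 := by
  classical
  rw [edgeDeck, deckGraphs, Multiset.map_map] at hc
  obtain ⟨e, he, rfl⟩ := Multiset.mem_map.mp hc
  refine ⟨G.deleteEdge e, rfl, ?_⟩
  have he' : e ∈ G.graph.edgeSet := by
    simpa using (Set.Finite.mem_toFinset _).mp he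
  simp only [edgeCount, deleteEdge, SimpleGraph.edgeSet_deleteEdges]
  exact Set.ncard_sdiff_singleton_of_mem he'

/-- The disjoint union of two finite graphs. -/
def disjUnion (G H : FGraph) : FGraph :=
  { V := G.V ⊕ H.V, graph := G.graph ⊕g H.graph }

end FGraph

/-- `𝒢 n` is the set of isomorphism classes of graphs with exactly `n` edges. -/
def GClass (n : ℕ) : Type 1 :=
  {c : GraphClass // ∃ G : FGraph, G.cls = c ∧ G.edgeCount = n}

/-- Given a graph `G` with `n` edges, sum a function `f` over the edge deck of `G`,
regarded as a multiset of isomorphism classes of graphs with `n - 1` edges. -/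
noncomputable def FGraph.edgeDeckSum (n : ℕ) (G : FGraph) (hG : G.edgeCount = n)
    {β : Type*} [AddCommMonoid β] (f : GClass (n - 1) → β) : β :=
  (G.edgeDeck.attach.map fun c => f ⟨c.1, by
    obtain ⟨H, h1, h2⟩ := FGraph.exists_of_mem_edgeDeck c.2
    exact ⟨H, h1, by rw [h2, hG]⟩⟩).sum

/-- The subgroup of relations defining `K₀(Γ_{n,n-1})`: for every graph `G` with `n`
edges, `[G] = Σ_{C ∈ ED(G)} [C]`. -/
def K0Rel (n : ℕ) : AddSubgroup (FreeAbelianGroup (GClass n ⊕ GClass (n - 1))) :=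
  AddSubgroup.closure
    {x | ∃ (G : FGraph) (hG : G.edgeCount = n),
      x = FreeAbelianGroup.of (Sum.inl ⟨G.cls, G, rfl, hG⟩)
        - G.edgeDeckSum n hG (fun c => FreeAbelianGroup.of (Sum.inr c))}

/-- `K₀(Γ_{n,n-1})`: the free abelian group on `𝒢 n ⊔ 𝒢 (n-1)` modulo the edge-deck
relations. -/
abbrev K0Gamma (n : ℕ) : Type 1 :=
  FreeAbelianGroup (GClass n ⊕ GClass (n - 1)) ⧸ K0Rel n

/-- The map `ι_n : 𝒢 n → K₀(Γ_{n,n-1})` sending a class to its image in the quotient. -/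
noncomputable def iotaCls (n : ℕ) (c : GClass n) : K0Gamma n :=
  QuotientAddGroup.mk (FreeAbelianGroup.of (Sum.inl c))

/-- Generalized edge reconstruction fails for `n`-edge graphs with `k` pieces: there are
two distinct multisets of `k` isomorphism classes of graphs with exactly `n` edges whose
total edge decks agree. -/
def GERFails (n k : ℕ) : Prop :=
  ∃ M M' : Multiset FGraph,
    Multiset.card M = k ∧ Multiset.card M' = k ∧
    (∀ G ∈ M, G.edgeCount = n) ∧ (∀ G ∈ M', G.edgeCount = n) ∧
    M.map FGraph.cls ≠ M'.map FGraph.cls ∧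
    (M.map FGraph.edgeDeck).sum = (M'.map FGraph.edgeDeck).sum

/-- `kmin n` is the least `k ≥ 1` for which generalized edge reconstruction fails for
`n`-edge graphs. -/
noncomputable def kmin (n : ℕ) : ℕ := sInf {k | 1 ≤ k ∧ GERFails n k}

/-- The graph `2K₂`: four vertices, two disjoint edges. -/
def twoK2 : FGraph :=
  { V := Fin 4, graph := SimpleGraph.fromEdgeSet {s(0, 1), s(2, 3)} }

/-- The graph `P₃ ⊔ K₁`: a two-edge path together with an isolated vertex. -/
def p3K1 : FGraph :=
  { V := Fin 4, graph := SimpleGraph.fromEdgeSet {s(0, 1), s(1, 2)} }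

/-- The graph `K₃ ⊔ K₁`: a triangle together with an isolated vertex. -/
def k3K1 : FGraph :=
  { V := Fin 4, graph := SimpleGraph.fromEdgeSet {s(0, 1), s(1, 2), s(0, 2)} }

/-- The star `K_{1,3}`: a center vertex adjacent to three leaves. -/
def k13 : FGraph :=
  { V := Fin 4, graph := SimpleGraph.fromEdgeSet {s(0, 1), s(0, 2), s(0, 3)} }

section Aux

open SimpleGraph

instance setInsertDec {α} [DecidableEq α] (a : α) (s : Set α) [DecidablePred (· ∈ s)] (x : α) :
    Decidable (x ∈ (insert a s : Set α)) := decidable_of_iff _ Set.mem_insert_iff.symm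

instance setSingDec {α} [DecidableEq α] (a : α) (x : α) :
    Decidable (x ∈ ({a} : Set α)) := decidable_of_iff _ Set.mem_singleton_iff.symm

instance fromEdgeSetDec {V} [DecidableEq V] (s : Set (Sym2 V)) [DecidablePred (· ∈ s)] :
    DecidableRel (SimpleGraph.fromEdgeSet s).Adj := fun _ _ =>
  decidable_of_iff _ (SimpleGraph.fromEdgeSet_adj s).symm

instance sumDec {α β} (G : SimpleGraph α) (H : SimpleGraph β)
    [DecidableRel G.Adj] [DecidableRel H.Adj] : DecidableRel (G ⊕g H).Adj := fun u v =>
  match u, v with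
  | .inl a, .inl b => decidable_of_iff (G.Adj a b) (by simp)
  | .inl _, .inr _ => .isFalse (by simp)
  | .inr _, .inl _ => .isFalse (by simp)
  | .inr a, .inr b => decidable_of_iff (H.Adj a b) (by simp)

instance delDec {V} [DecidableEq V] (G : SimpleGraph V) (s : Set (Sym2 V))
    [DecidableRel G.Adj] [DecidablePred (· ∈ s)] : DecidableRel (G.deleteEdges s).Adj :=
  fun a b => decidable_of_iff _ (SimpleGraph.deleteEdges_adj ..).symm

/-- `K₂ ⊔ 2K₁`. -/
def e1G : FGraph := { V := Fin 4, graph := SimpleGraph.fromEdgeSet {s(0, 1)} }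

instance : DecidableEq twoK2.V := inferInstanceAs (DecidableEq (Fin 4))
instance : DecidableEq p3K1.V := inferInstanceAs (DecidableEq (Fin 4))
instance : DecidableEq k3K1.V := inferInstanceAs (DecidableEq (Fin 4))
instance : DecidableEq k13.V := inferInstanceAs (DecidableEq (Fin 4))
instance : DecidableEq e1G.V := inferInstanceAs (DecidableEq (Fin 4))
instance : DecidableRel twoK2.graph.Adj := fromEdgeSetDec (V := Fin 4) _
instance : DecidableRel p3K1.graph.Adj := fromEdgeSetDec (V := Fin 4) _
instance : DecidableRel k3K1.graph.Adj := fromEdgeSetDec (V := Fin 4) _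
instance : DecidableRel k13.graph.Adj := fromEdgeSetDec (V := Fin 4) _
instance : DecidableRel e1G.graph.Adj := fromEdgeSetDec (V := Fin 4) _


instance : Fintype twoK2.V := inferInstanceAs (Fintype (Fin 4))
instance : Fintype p3K1.V := inferInstanceAs (Fintype (Fin 4))
instance : Fintype k3K1.V := inferInstanceAs (Fintype (Fin 4))
instance : Fintype k13.V := inferInstanceAs (Fintype (Fin 4))
instance : Fintype e1G.V := inferInstanceAs (Fintype (Fin 4))

instance ftDU (G H : FGraph) [Fintype G.V] [Fintype H.V] :
    Fintype (G.disjUnion H).V := inferInstanceAs (Fintype (G.V ⊕ H.V))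

instance dEqDU (G H : FGraph) [DecidableEq G.V] [DecidableEq H.V] :
    DecidableEq (G.disjUnion H).V := inferInstanceAs (DecidableEq (G.V ⊕ H.V))

instance dAdjDU (G H : FGraph) [DecidableRel G.graph.Adj] [DecidableRel H.graph.Adj] :
    DecidableRel (G.disjUnion H).graph.Adj := sumDec G.graph H.graph

instance dAdjDel (G : FGraph) [DecidableEq G.V] [DecidableRel G.graph.Adj] (e : Sym2 G.V) :
    DecidableRel (G.deleteEdge e).graph.Adj := delDec G.graph {e}

instance (G : FGraph) (e : Sym2 G.V) [Fintype G.V] : Fintype (G.deleteEdge e).V :=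
  inferInstanceAs (Fintype G.V)
instance (G : FGraph) (e : Sym2 G.V) [DecidableEq G.V] : DecidableEq (G.deleteEdge e).V :=
  inferInstanceAs (DecidableEq G.V)

lemma cls_eq_of_iso {G H : FGraph} (f : G.graph ≃g H.graph) : G.cls = H.cls :=
  Quotient.sound ⟨f⟩

def mkIso {V W} {G : SimpleGraph V} {H : SimpleGraph W} (e : V ≃ W)
    (h : ∀ a b, H.Adj (e a) (e b) ↔ G.Adj a b) : G ≃g H := ⟨e, h _ _⟩

def mkPerm (f g : Fin 4 → Fin 4) (h1 : ∀ x, g (f x) = x) (h2 : ∀ x, f (g x) = x) :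
    Fin 4 ≃ Fin 4 := ⟨f, g, h1, h2⟩

lemma edgeDeck_eq (G : FGraph) (S : Finset (Sym2 G.V)) (h : G.graph.edgeSet = ↑S) :
    G.edgeDeck = S.val.map (fun e => (G.deleteEdge e).cls) := by
  rw [FGraph.edgeDeck, FGraph.deckGraphs, Multiset.map_map]
  congr 1
  · congr 1
    ext e
    simp [Set.Finite.mem_toFinset, h]

lemma edgeCount_eq (G : FGraph) (S : Finset (Sym2 G.V)) (h : G.graph.edgeSet = ↑S) :
    G.edgeCount = S.card := by
  rw [FGraph.edgeCount, h, Set.ncard_coe_finset]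

lemma key_multiset {α} (x y z w : α) :
    ({x, x, y, y, y} : Multiset α) + {z, z, w, w, w} = {x, x, w, w, w} + {z, z, y, y, y} := by
  have h1 : ({x, x, y, y, y} : Multiset α) = {x, x} + {y, y, y} := rfl
  have h2 : ({z, z, w, w, w} : Multiset α) = {z, z} + {w, w, w} := rfl
  have h3 : ({x, x, w, w, w} : Multiset α) = {x, x} + {w, w, w} := rfl
  have h4 : ({z, z, y, y, y} : Multiset α) = {z, z} + {y, y, y} := rfl
  rw [h1, h2, h3, h4]; abel

end Aux

section Main
open SimpleGraph Sum

abbrev V8 := Fin 4 ⊕ Fin 4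

/-- edge multisets -/
def mAC : Multiset (Sym2 V8) :=
  {s(inl 0, inl 1), s(inl 2, inl 3), s(inr 0, inr 1), s(inr 0, inr 2), s(inr 0, inr 3)}
def mBD : Multiset (Sym2 V8) :=
  {s(inl 0, inl 1), s(inl 1, inl 2), s(inr 0, inr 1), s(inr 1, inr 2), s(inr 0, inr 2)}
def mBC : Multiset (Sym2 V8) :=
  {s(inl 0, inl 1), s(inl 1, inl 2), s(inr 0, inr 1), s(inr 0, inr 2), s(inr 0, inr 3)}
def mAD : Multiset (Sym2 V8) :=
  {s(inl 0, inl 1), s(inl 2, inl 3), s(inr 0, inr 1), s(inr 1, inr 2), s(inr 0, inr 2)}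

def sAC : Finset (Sym2 V8) := ⟨mAC, by decide⟩
def sBD : Finset (Sym2 V8) := ⟨mBD, by decide⟩
def sBC : Finset (Sym2 V8) := ⟨mBC, by decide⟩
def sAD : Finset (Sym2 V8) := ⟨mAD, by decide⟩

instance (e : Sym2 (twoK2.disjUnion k13).V) :
    Decidable (@Membership.mem (Sym2 (twoK2.disjUnion k13).V) (Set (Sym2 (twoK2.disjUnion k13).V)) _
      (↑sAC : Set (Sym2 V8)) e) := Finset.decidableMem' e sAC
instance (e : Sym2 (p3K1.disjUnion k3K1).V) :
    Decidable (@Membership.mem (Sym2 (p3K1.disjUnion k3K1).V) (Set (Sym2 (p3K1.disjUnion k3K1).V)) _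
      (↑sBD : Set (Sym2 V8)) e) := Finset.decidableMem' e sBD
instance (e : Sym2 (p3K1.disjUnion k13).V) :
    Decidable (@Membership.mem (Sym2 (p3K1.disjUnion k13).V) (Set (Sym2 (p3K1.disjUnion k13).V)) _
      (↑sBC : Set (Sym2 V8)) e) := Finset.decidableMem' e sBC
instance (e : Sym2 (twoK2.disjUnion k3K1).V) :
    Decidable (@Membership.mem (Sym2 (twoK2.disjUnion k3K1).V) (Set (Sym2 (twoK2.disjUnion k3K1).V)) _
      (↑sAD : Set (Sym2 V8)) e) := Finset.decidableMem' e sAD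
instance (e : Sym2 V8) : Fintype ((twoK2.disjUnion k13).deleteEdge e).V := inferInstanceAs (Fintype V8)
instance (e : Sym2 V8) : Fintype ((p3K1.disjUnion k3K1).deleteEdge e).V := inferInstanceAs (Fintype V8)
instance (e : Sym2 V8) : Fintype ((p3K1.disjUnion k13).deleteEdge e).V := inferInstanceAs (Fintype V8)
instance (e : Sym2 V8) : Fintype ((twoK2.disjUnion k3K1).deleteEdge e).V := inferInstanceAs (Fintype V8)
instance (e : Sym2 V8) : DecidableRel ((twoK2.disjUnion k13).deleteEdge e).graph.Adj := dAdjDel (twoK2.disjUnion k13) e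
instance (e : Sym2 V8) : DecidableRel ((p3K1.disjUnion k3K1).deleteEdge e).graph.Adj := dAdjDel (p3K1.disjUnion k3K1) e
instance (e : Sym2 V8) : DecidableRel ((p3K1.disjUnion k13).deleteEdge e).graph.Adj := dAdjDel (p3K1.disjUnion k13) e
instance (e : Sym2 V8) : DecidableRel ((twoK2.disjUnion k3K1).deleteEdge e).graph.Adj := dAdjDel (twoK2.disjUnion k3K1) e

lemma hAC : (twoK2.disjUnion k13).graph.edgeSet = (↑sAC : Set (Sym2 V8)) := by
  ext e; revert e; decide
lemma hBD : (p3K1.disjUnion k3K1).graph.edgeSet = (↑sBD : Set (Sym2 V8)) := by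
  ext e; revert e; decide
lemma hBC : (p3K1.disjUnion k13).graph.edgeSet = (↑sBC : Set (Sym2 V8)) := by
  ext e; revert e; decide
lemma hAD : (twoK2.disjUnion k3K1).graph.edgeSet = (↑sAD : Set (Sym2 V8)) := by
  ext e; revert e; decide

end Main

section Cls
open SimpleGraph Sum Equiv

def swap2 : Fin 4 ≃ Fin 4 := mkPerm ![2,3,0,1] ![2,3,0,1] (by decide) (by decide)
def pB1 : Fin 4 ≃ Fin 4 := mkPerm ![2,0,1,3] ![1,2,0,3] (by decide) (by decide)
def pC1 : Fin 4 ≃ Fin 4 := mkPerm ![1,3,0,2] ![2,0,3,1] (by decide) (by decide)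
def pC2 : Fin 4 ≃ Fin 4 := mkPerm ![1,0,3,2] ![1,0,3,2] (by decide) (by decide)
def pC3 : Fin 4 ≃ Fin 4 := mkPerm ![1,0,2,3] ![1,0,2,3] (by decide) (by decide)
def pD1 : Fin 4 ≃ Fin 4 := mkPerm ![0,2,1,3] ![0,2,1,3] (by decide) (by decide)

noncomputable abbrev X : GraphClass := (e1G.disjUnion k13).cls
noncomputable abbrev Y : GraphClass := (twoK2.disjUnion p3K1).cls
noncomputable abbrev Z : GraphClass := (e1G.disjUnion k3K1).cls
noncomputable abbrev W : GraphClass := (p3K1.disjUnion p3K1).cls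

lemma cAC1 : ((twoK2.disjUnion k13).deleteEdge (s(inl (0 : Fin 4), inl (1 : Fin 4)) : Sym2 V8)).cls = X :=
  cls_eq_of_iso (mkIso (sumCongr swap2 (Equiv.refl _)) (by decide))
lemma cAC2 : ((twoK2.disjUnion k13).deleteEdge (s(inl (2 : Fin 4), inl (3 : Fin 4)) : Sym2 V8)).cls = X :=
  cls_eq_of_iso (mkIso (Equiv.refl _) (by decide))
lemma cAC3 : ((twoK2.disjUnion k13).deleteEdge (s(inr (0 : Fin 4), inr (1 : Fin 4)) : Sym2 V8)).cls = Y :=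
  cls_eq_of_iso (mkIso (sumCongr (Equiv.refl _) pC1) (by decide))
lemma cAC4 : ((twoK2.disjUnion k13).deleteEdge (s(inr (0 : Fin 4), inr (2 : Fin 4)) : Sym2 V8)).cls = Y :=
  cls_eq_of_iso (mkIso (sumCongr (Equiv.refl _) pC2) (by decide))
lemma cAC5 : ((twoK2.disjUnion k13).deleteEdge (s(inr (0 : Fin 4), inr (3 : Fin 4)) : Sym2 V8)).cls = Y :=
  cls_eq_of_iso (mkIso (sumCongr (Equiv.refl _) pC3) (by decide))

lemma cBD1 : ((p3K1.disjUnion k3K1).deleteEdge (s(inl (0 : Fin 4), inl (1 : Fin 4)) : Sym2 V8)).cls = Z :=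
  cls_eq_of_iso (mkIso (sumCongr pB1 (Equiv.refl _)) (by decide))
lemma cBD2 : ((p3K1.disjUnion k3K1).deleteEdge (s(inl (1 : Fin 4), inl (2 : Fin 4)) : Sym2 V8)).cls = Z :=
  cls_eq_of_iso (mkIso (Equiv.refl _) (by decide))
lemma cBD3 : ((p3K1.disjUnion k3K1).deleteEdge (s(inr (0 : Fin 4), inr (1 : Fin 4)) : Sym2 V8)).cls = W :=
  cls_eq_of_iso (mkIso (sumCongr (Equiv.refl _) pD1) (by decide))
lemma cBD4 : ((p3K1.disjUnion k3K1).deleteEdge (s(inr (1 : Fin 4), inr (2 : Fin 4)) : Sym2 V8)).cls = W :=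
  cls_eq_of_iso (mkIso (sumCongr (Equiv.refl _) pC3) (by decide))
lemma cBD5 : ((p3K1.disjUnion k3K1).deleteEdge (s(inr (0 : Fin 4), inr (2 : Fin 4)) : Sym2 V8)).cls = W :=
  cls_eq_of_iso (mkIso (Equiv.refl _) (by decide))

lemma cBC1 : ((p3K1.disjUnion k13).deleteEdge (s(inl (0 : Fin 4), inl (1 : Fin 4)) : Sym2 V8)).cls = X :=
  cls_eq_of_iso (mkIso (sumCongr pB1 (Equiv.refl _)) (by decide))
lemma cBC2 : ((p3K1.disjUnion k13).deleteEdge (s(inl (1 : Fin 4), inl (2 : Fin 4)) : Sym2 V8)).cls = X :=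
  cls_eq_of_iso (mkIso (Equiv.refl _) (by decide))
lemma cBC3 : ((p3K1.disjUnion k13).deleteEdge (s(inr (0 : Fin 4), inr (1 : Fin 4)) : Sym2 V8)).cls = W :=
  cls_eq_of_iso (mkIso (sumCongr (Equiv.refl _) pC1) (by decide))
lemma cBC4 : ((p3K1.disjUnion k13).deleteEdge (s(inr (0 : Fin 4), inr (2 : Fin 4)) : Sym2 V8)).cls = W :=
  cls_eq_of_iso (mkIso (sumCongr (Equiv.refl _) pC2) (by decide))
lemma cBC5 : ((p3K1.disjUnion k13).deleteEdge (s(inr (0 : Fin 4), inr (3 : Fin 4)) : Sym2 V8)).cls = W :=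
  cls_eq_of_iso (mkIso (sumCongr (Equiv.refl _) pC3) (by decide))

lemma cAD1 : ((twoK2.disjUnion k3K1).deleteEdge (s(inl (0 : Fin 4), inl (1 : Fin 4)) : Sym2 V8)).cls = Z :=
  cls_eq_of_iso (mkIso (sumCongr swap2 (Equiv.refl _)) (by decide))
lemma cAD2 : ((twoK2.disjUnion k3K1).deleteEdge (s(inl (2 : Fin 4), inl (3 : Fin 4)) : Sym2 V8)).cls = Z :=
  cls_eq_of_iso (mkIso (Equiv.refl _) (by decide))
lemma cAD3 : ((twoK2.disjUnion k3K1).deleteEdge (s(inr (0 : Fin 4), inr (1 : Fin 4)) : Sym2 V8)).cls = Y :=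
  cls_eq_of_iso (mkIso (sumCongr (Equiv.refl _) pD1) (by decide))
lemma cAD4 : ((twoK2.disjUnion k3K1).deleteEdge (s(inr (1 : Fin 4), inr (2 : Fin 4)) : Sym2 V8)).cls = Y :=
  cls_eq_of_iso (mkIso (sumCongr (Equiv.refl _) pC3) (by decide))
lemma cAD5 : ((twoK2.disjUnion k3K1).deleteEdge (s(inr (0 : Fin 4), inr (2 : Fin 4)) : Sym2 V8)).cls = Y :=
  cls_eq_of_iso (mkIso (Equiv.refl _) (by decide))

lemma deckAC : (twoK2.disjUnion k13).edgeDeck = {X, X, Y, Y, Y} := by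
  rw [edgeDeck_eq _ sAC hAC]
  show Multiset.map (fun e : Sym2 V8 => ((twoK2.disjUnion k13).deleteEdge e).cls) mAC = _
  simp only [mAC, Multiset.insert_eq_cons, Multiset.map_cons, Multiset.map_singleton,
    cAC1, cAC2, cAC3, cAC4, cAC5]

lemma deckBD : (p3K1.disjUnion k3K1).edgeDeck = {Z, Z, W, W, W} := by
  rw [edgeDeck_eq _ sBD hBD]
  show Multiset.map (fun e : Sym2 V8 => ((p3K1.disjUnion k3K1).deleteEdge e).cls) mBD = _
  simp only [mBD, Multiset.insert_eq_cons, Multiset.map_cons, Multiset.map_singleton,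
    cBD1, cBD2, cBD3, cBD4, cBD5]

lemma deckBC : (p3K1.disjUnion k13).edgeDeck = {X, X, W, W, W} := by
  rw [edgeDeck_eq _ sBC hBC]
  show Multiset.map (fun e : Sym2 V8 => ((p3K1.disjUnion k13).deleteEdge e).cls) mBC = _
  simp only [mBC, Multiset.insert_eq_cons, Multiset.map_cons, Multiset.map_singleton,
    cBC1, cBC2, cBC3, cBC4, cBC5]

lemma deckAD : (twoK2.disjUnion k3K1).edgeDeck = {Z, Z, Y, Y, Y} := by
  rw [edgeDeck_eq _ sAD hAD]
  show Multiset.map (fun e : Sym2 V8 => ((twoK2.disjUnion k3K1).deleteEdge e).cls) mAD = _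
  simp only [mAD, Multiset.insert_eq_cons, Multiset.map_cons, Multiset.map_singleton,
    cAD1, cAD2, cAD3, cAD4, cAD5]

end Cls

section Final
open SimpleGraph Sum

lemma countAC : (twoK2.disjUnion k13).edgeCount = 5 := by
  rw [edgeCount_eq _ sAC hAC]; decide
lemma countBD : (p3K1.disjUnion k3K1).edgeCount = 5 := by
  rw [edgeCount_eq _ sBD hBD]; decide
lemma countBC : (p3K1.disjUnion k13).edgeCount = 5 := by
  rw [edgeCount_eq _ sBC hBC]; decide
lemma countAD : (twoK2.disjUnion k3K1).edgeCount = 5 := by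
  rw [edgeCount_eq _ sAD hAD]; decide

/-- `A ⊔ C` has no isolated vertex. -/
lemma AC_no_isolated : ∀ v : V8, ∃ w, (twoK2.disjUnion k13).graph.Adj v w := by
  show ∀ v : (twoK2.disjUnion k13).V, ∃ w, (twoK2.disjUnion k13).graph.Adj v w; decide

lemma BC_isolated : ∀ w : V8, ¬ (p3K1.disjUnion k13).graph.Adj (inl (3 : Fin 4)) w := by
  show ∀ w : (p3K1.disjUnion k13).V, ¬ (p3K1.disjUnion k13).graph.Adj (id (inl (3 : Fin 4)) : (p3K1.disjUnion k13).V) w; decide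
lemma AD_isolated : ∀ w : V8, ¬ (twoK2.disjUnion k3K1).graph.Adj (inr (3 : Fin 4)) w := by
  show ∀ w : (twoK2.disjUnion k3K1).V, ¬ (twoK2.disjUnion k3K1).graph.Adj (id (inr (3 : Fin 4)) : (twoK2.disjUnion k3K1).V) w; decide

lemma cls_ne_of_isolated {G : FGraph} (v : G.V)
    (hG : ∀ w, ¬ G.graph.Adj v w)
    (hH : ∀ v : V8, ∃ w, (twoK2.disjUnion k13).graph.Adj v w) :
    (twoK2.disjUnion k13).cls ≠ G.cls := by
  intro h
  obtain ⟨f⟩ := Quotient.exact h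
  obtain ⟨w, hw⟩ := hH (f.symm v)
  have : G.graph.Adj (f (f.symm v)) (f w) := f.map_rel_iff.mpr hw
  rw [f.apply_symm_apply] at this
  exact hG _ this

lemma ne_BC : (twoK2.disjUnion k13).cls ≠ (p3K1.disjUnion k13).cls :=
  cls_ne_of_isolated (inl (3 : Fin 4)) BC_isolated AC_no_isolated
lemma ne_AD : (twoK2.disjUnion k13).cls ≠ (twoK2.disjUnion k3K1).cls :=
  cls_ne_of_isolated (inr (3 : Fin 4)) AD_isolated AC_no_isolated

lemma cls_ne_multiset :
    ({(twoK2.disjUnion k13).cls, (p3K1.disjUnion k3K1).cls} : Multiset GraphClass)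
      ≠ {(p3K1.disjUnion k13).cls, (twoK2.disjUnion k3K1).cls} := by
  intro h
  have hm : (twoK2.disjUnion k13).cls ∈
      ({(p3K1.disjUnion k13).cls, (twoK2.disjUnion k3K1).cls} : Multiset GraphClass) := by
    rw [← h]; simp
  simp only [Multiset.insert_eq_cons, Multiset.mem_cons, Multiset.mem_singleton] at hm
  rcases hm with hm | hm
  · exact ne_BC hm
  · exact ne_AD hm

lemma deck_sum_eq :
    (twoK2.disjUnion k13).edgeDeck + (p3K1.disjUnion k3K1).edgeDeck
      = (p3K1.disjUnion k13).edgeDeck + (twoK2.disjUnion k3K1).edgeDeck := by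
  rw [deckAC, deckBD, deckBC, deckAD]
  exact key_multiset X Y Z W

lemma gerfails : GERFails 5 2 := by
  refine ⟨{twoK2.disjUnion k13, p3K1.disjUnion k3K1},
    {p3K1.disjUnion k13, twoK2.disjUnion k3K1}, rfl, rfl, ?_, ?_, ?_, ?_⟩
  · intro G hG
    simp only [Multiset.insert_eq_cons, Multiset.mem_cons, Multiset.mem_singleton] at hG
    rcases hG with rfl | rfl
    · exact countAC
    · exact countBD
  · intro G hG
    simp only [Multiset.insert_eq_cons, Multiset.mem_cons, Multiset.mem_singleton] at hG
    rcases hG with rfl | rfl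
    · exact countBC
    · exact countAD
  · simpa using cls_ne_multiset
  · simpa using deck_sum_eq

lemma kmin_le : kmin 5 ≤ 2 := Nat.sInf_le ⟨one_le_two, gerfails⟩

end Final


/-- with `A = 2K₂`, `B = P₃ ⊔ K₁`, `C = K_{1,3}`, `D = K₃ ⊔ K₁`, the
multisets `{[A ⊔ C], [B ⊔ D]}` and `{[B ⊔ C], [A ⊔ D]}` are distinct multisets of
classes of 5-edge graphs with `ED(A ⊔ C) + ED(B ⊔ D) = ED(B ⊔ C) + ED(A ⊔ D)`;
hence generalized edge reconstruction fails for `n = 5` with `k = 2`, i.e. `k₅ ≤ 2`. -/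
theorem k5_le_two :
    (twoK2.disjUnion k13).edgeCount = 5 ∧
    (p3K1.disjUnion k3K1).edgeCount = 5 ∧
    (p3K1.disjUnion k13).edgeCount = 5 ∧
    (twoK2.disjUnion k3K1).edgeCount = 5 ∧
    ({(twoK2.disjUnion k13).cls, (p3K1.disjUnion k3K1).cls} : Multiset GraphClass)
      ≠ {(p3K1.disjUnion k13).cls, (twoK2.disjUnion k3K1).cls} ∧
    (twoK2.disjUnion k13).edgeDeck + (p3K1.disjUnion k3K1).edgeDeck
      = (p3K1.disjUnion k13).edgeDeck + (twoK2.disjUnion k3K1).edgeDeck ∧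
    GERFails 5 2 ∧ kmin 5 ≤ 2 :=
  ⟨countAC, countBD, countBC, countAD, cls_ne_multiset, deck_sum_eq, gerfails, kmin_le⟩
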